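/- Let k > 1 and let f : ℝ → ℝ be a positive function differentiable on [0, 1]. Define g(R) = (k−1)/((k−1)/k − R) for R ≠ (k−1)/k. Let (I*, R*) be an endemic equilibrium, i.e., I* > 0, f(R*)·(1 − I* − R*) = k and (k−1)·I* = R*, and suppose f'(R*) ≠ g'(R*). Then either f'(R*) < f(R*)²/(k−1) (so that every complex eigenvalue of the Jacobian J(I*, R*) has negative real part), or there exists another endemic equilibrium (Ī*, R̄*) with R̄* > R*, i.e., there exists R̄* ∈ (R*, (k−1)/k) with f(R̄*) = g(R̄*). -/

import Mathlib

open Polynomial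

lemma quad_root_neg_re (T D : ℝ) (hT : T < 0) (hD : 0 < D) (μ : ℂ)
    (h : μ ^ 2 - (T : ℂ) * μ + (D : ℂ) = 0) : μ.re < 0 := by
  have h1 := congrArg Complex.re h
  have h2 := congrArg Complex.im h
  simp [pow_two, Complex.mul_re, Complex.mul_im] at h1 h2
  set x := μ.re
  set y := μ.im
  rcases eq_or_ne y 0 with hy | hy
  · rw [hy] at h1
    by_contra hx
    push_neg at hx
    nlinarith
  · have h3 : y * (2 * x - T) = 0 := by ring_nf; ring_nf at h2; linarith
    have : 2 * x - T = 0 := by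
      rcases mul_eq_zero.mp h3 with h | h
      · exact absurd h hy
      · exact h
    linarith

lemma pos_right_of_deriv {φ : ℝ → ℝ} {x d : ℝ} (h : HasDerivAt φ d x) (h0 : φ x = 0)
    (hd : 0 < d) : ∀ᶠ y in nhdsWithin x (Set.Ioi x), 0 < φ y := by
  rw [hasDerivAt_iff_tendsto_slope] at h
  have hev : ∀ᶠ y in nhdsWithin x {x}ᶜ, 0 < slope φ x y :=
    h (Ioi_mem_nhds hd)
  have hmono : nhdsWithin x (Set.Ioi x) ≤ nhdsWithin x {x}ᶜ :=
    nhdsWithin_mono x (fun y hy => ne_of_gt hy)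
  filter_upwards [hmono hev, self_mem_nhdsWithin] with y hy hxy
  have hyx : 0 < y - x := sub_pos.mpr hxy
  have hm := mul_pos hy hyx
  rw [slope_def_field] at hm
  have : φ y - φ x > 0 := by
    rw [div_mul_cancel₀] at hm
    · linarith [hm]
    · exact ne_of_gt hyx
  linarith [h0, this]

lemma root_quadratic_of_charpoly (a b c d : ℝ) (J : Matrix (Fin 2) (Fin 2) ℝ)
    (hJ : J = !![a, b; c, d]) (μ : ℂ) (h : (J.map Complex.ofReal).charpoly.IsRoot μ) :
    μ ^ 2 - ((a + d : ℝ) : ℂ) * μ + ((a * d - b * c : ℝ) : ℂ) = 0 := by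
  have hMap : J.map Complex.ofReal = !![(a:ℂ), (b:ℂ); (c:ℂ), (d:ℂ)] := by
    subst hJ; ext i j; fin_cases i <;> fin_cases j <;> simp [Matrix.map_apply]
  rw [hMap] at h
  have hcp : (!![(a:ℂ), (b:ℂ); (c:ℂ), (d:ℂ)]).charpoly
      = (X - C (a:ℂ)) * (X - C (d:ℂ)) - C (b:ℂ) * C (c:ℂ) := by
    rw [Matrix.charpoly, Matrix.det_fin_two]
    rw [Matrix.charmatrix_apply_eq, Matrix.charmatrix_apply_eq,
      Matrix.charmatrix_apply_ne _ _ _ (by decide), Matrix.charmatrix_apply_ne _ _ _ (by decide)]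
    simp
  rw [hcp] at h
  simp only [Polynomial.IsRoot, Polynomial.eval_sub, Polynomial.eval_mul, Polynomial.eval_X,
    Polynomial.eval_C] at h
  push_cast
  linear_combination h

/-- At an endemic equilibrium with f'(R*) ≠ g'(R*), either the equilibrium is
locally stable (f'(R*) < f(R*)²/(k−1), so every complex eigenvalue of the
Jacobian has negative real part) or there is another endemic equilibrium with
a larger R-coordinate. -/
theorem sir_endemic_equilibrium_stable_or_another
    (k : ℝ) (hk : 1 < k)
    (f : ℝ → ℝ) (hf_pos : ∀ x, 0 < f x)
    (hf_diff : DifferentiableOn ℝ f (Set.Icc 0 1))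
    (g : ℝ → ℝ) (hg : ∀ R, g R = (k - 1) / ((k - 1) / k - R))
    (Istar Rstar : ℝ) (hIstar : 0 < Istar)
    (heq1 : f Rstar * (1 - Istar - Rstar) = k)
    (heq2 : (k - 1) * Istar = Rstar)
    (hderiv_ne : deriv f Rstar ≠ deriv g Rstar)
    (J : Matrix (Fin 2) (Fin 2) ℝ)
    (hJ : J = !![-Istar * f Rstar, Istar * (deriv f Rstar * k / f Rstar - f Rstar);
                 k - 1, -1]) :
    (deriv f Rstar < (f Rstar) ^ 2 / (k - 1) ∧
      ∀ μ : ℂ, (J.map Complex.ofReal).charpoly.IsRoot μ → μ.re < 0) ∨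
    (∃ Rbar ∈ Set.Ioo Rstar ((k - 1) / k), f Rbar = g Rbar) := by
  have hk0 : (0:ℝ) < k := by linarith
  have hk1 : (0:ℝ) < k - 1 := by linarith
  have hfR : 0 < f Rstar := hf_pos Rstar
  have hRpos : 0 < Rstar := by
    rw [← heq2]; exact mul_pos hk1 hIstar
  -- 1 - Istar - Rstar > 0
  have hS : 0 < 1 - Istar - Rstar := by
    by_contra h
    push_neg at h
    nlinarith [mul_nonpos_of_nonneg_of_nonpos (le_of_lt hfR) h]
  -- Rstar < (k-1)/k
  have hRb : Rstar < (k - 1) / k := by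
    rw [lt_div_iff₀ hk0, ← heq2]
    nlinarith
  have hbne : (k - 1) / k - Rstar ≠ 0 := by
    have : 0 < (k - 1) / k - Rstar := sub_pos.mpr hRb
    exact ne_of_gt this
  have hbpos : 0 < (k - 1) / k - Rstar := sub_pos.mpr hRb
  -- f Rstar * ((k-1)/k - Rstar) = k - 1
  have hfg : f Rstar * ((k - 1) / k - Rstar) = k - 1 := by
    have h : f Rstar * ((k - 1) - k * Rstar) = k * (k - 1) := by
      linear_combination (k - 1) * heq1 + f Rstar * heq2
    have hkne : (k:ℝ) ≠ 0 := ne_of_gt hk0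
    field_simp
    linarith [h]
  have hfval : f Rstar = (k - 1) / ((k - 1) / k - Rstar) := by
    rw [eq_div_iff hbne]; exact hfg
  -- derivative of g at Rstar
  have hgderiv : HasDerivAt g ((k - 1) / ((k - 1) / k - Rstar) ^ 2) Rstar := by
    have h1 : HasDerivAt (fun R : ℝ => (k - 1) / k - R) (-1) Rstar := by
      simpa using (hasDerivAt_id Rstar).const_sub ((k - 1) / k)
    have h2 := (h1.inv hbne).const_mul (k - 1)
    have hgfun : g = fun R => (k - 1) * ((k - 1) / k - R)⁻¹ := by
      funext R; rw [hg R, div_eq_mul_inv]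
    rw [hgfun]
    exact h2.congr_deriv (by ring)
  have hgval : deriv g Rstar = (f Rstar) ^ 2 / (k - 1) := by
    rw [hgderiv.deriv, hfval, div_pow, div_div, sq (k - 1),
      mul_div_mul_right _ _ (ne_of_gt hk1)]
  by_cases hlt : deriv f Rstar < (f Rstar) ^ 2 / (k - 1)
  · -- stable case
    left
    refine ⟨hlt, fun μ hroot => ?_⟩
    set a := -Istar * f Rstar with ha
    set bb := Istar * (deriv f Rstar * k / f Rstar - f Rstar) with hbb
    have hquad := root_quadratic_of_charpoly a bb (k - 1) (-1) J hJ μ hroot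
    have hTneg : a + (-1) < 0 := by
      have : 0 < Istar * f Rstar := mul_pos hIstar hfR
      rw [ha]; nlinarith
    have hder : deriv f Rstar * (k - 1) < (f Rstar) ^ 2 :=
      (lt_div_iff₀ hk1).mp hlt
    have hDpos : 0 < a * (-1) - bb * (k - 1) := by
      have hfne : f Rstar ≠ 0 := ne_of_gt hfR
      have hDval : a * (-1) - bb * (k - 1)
          = k * Istar * ((f Rstar) ^ 2 - (k - 1) * deriv f Rstar) / f Rstar := by
        rw [ha, hbb]; field_simp; ring
      rw [hDval]
      apply div_pos _ hfR
      apply mul_pos (mul_pos hk0 hIstar)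
      nlinarith
    exact quad_root_neg_re (a + (-1)) (a * (-1) - bb * (k - 1)) hTneg hDpos μ hquad
  · -- another equilibrium case
    right
    push_neg at hlt
    have hgt : (f Rstar) ^ 2 / (k - 1) < deriv f Rstar := by
      rcases lt_or_eq_of_le hlt with h | h
      · exact h
      · exact absurd (by rw [hgval, h]) hderiv_ne
    set b := (k - 1) / k with hb
    have hb1 : b < 1 := by
      rw [hb, div_lt_one hk0]; linarith
    -- f differentiable at Rstar
    have hRmem : Set.Icc (0:ℝ) 1 ∈ nhds Rstar :=
      Icc_mem_nhds hRpos (lt_trans hRb hb1)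
    have hfd : DifferentiableAt ℝ f Rstar := hf_diff.differentiableAt hRmem
    set φ := fun R => f R - g R with hφ
    have hφderiv : HasDerivAt φ (deriv f Rstar - deriv g Rstar) Rstar :=
      hfd.hasDerivAt.sub (by rw [hgderiv.deriv]; exact hgderiv)
    have hφ0 : φ Rstar = 0 := by
      rw [hφ]; simp only []
      rw [hg Rstar, hfval]; ring
    have hdpos : 0 < deriv f Rstar - deriv g Rstar := by
      rw [hgval]; linarith
    have hev := pos_right_of_deriv hφderiv hφ0 hdpos
    have hIoo : Set.Ioo Rstar b ∈ nhdsWithin Rstar (Set.Ioi Rstar) :=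
      Ioo_mem_nhdsGT_of_mem ⟨le_refl Rstar, hRb⟩
    obtain ⟨x₀, hφx₀, hx₀⟩ := (hev.and (Filter.eventually_of_mem hIoo (fun y hy => hy))).exists
    -- maximum of f on [0,1]
    obtain ⟨z, hz, hmax⟩ := isCompact_Icc.exists_isMaxOn
      (Set.nonempty_Icc.mpr zero_le_one) hf_diff.continuousOn
    set M := f z with hM
    have hMpos : 0 < M := hf_pos z
    set ε := min ((b - x₀) / 2) ((k - 1) / (M + 1)) with hε
    have hεpos : 0 < ε := by
      apply lt_min
      · linarith [hx₀.2]
      · exact div_pos hk1 (by linarith)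
    set y₀ := b - ε with hy₀
    have hx₀y₀ : x₀ < y₀ := by
      have h1 : ε ≤ (b - x₀) / 2 := min_le_left _ _
      rw [hy₀]; linarith [hx₀.2]
    have hy₀b : y₀ < b := by rw [hy₀]; linarith
    have hy₀mem : y₀ ∈ Set.Icc (0:ℝ) 1 := by
      constructor
      · have : 0 < x₀ := lt_trans hRpos hx₀.1
        linarith
      · linarith
    have hgy₀ : g y₀ = (k - 1) / ε := by
      rw [hg y₀, hy₀, hb]; ring_nf
    have hgy₀_ge : M + 1 ≤ g y₀ := by
      rw [hgy₀]
      rw [le_div_iff₀ hεpos]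
      have h2 : ε ≤ (k - 1) / (M + 1) := min_le_right _ _
      rw [le_div_iff₀ (by linarith : (0:ℝ) < M + 1)] at h2
      linarith
    have hφy₀ : φ y₀ < 0 := by
      have hfy₀ : f y₀ ≤ M := hmax hy₀mem
      have : φ y₀ = f y₀ - g y₀ := rfl
      linarith
    -- continuity of φ on [x₀, y₀]
    have hsub : Set.Icc x₀ y₀ ⊆ Set.Icc (0:ℝ) 1 := by
      intro t ht
      constructor
      · have : 0 < x₀ := lt_trans hRpos hx₀.1
        linarith [ht.1]
      · linarith [ht.2, hy₀mem.2]
    have hgcont : ContinuousOn g (Set.Icc x₀ y₀) := by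
      have hgfun : g = fun R => (k - 1) / ((k - 1) / k - R) := funext hg
      rw [hgfun]
      apply ContinuousOn.div continuousOn_const (by fun_prop)
      intro t ht
      have : t ≤ y₀ := ht.2
      have : 0 < (k - 1) / k - t := by rw [← hb]; rw [hy₀] at this; linarith
      exact ne_of_gt this
    have hφcont : ContinuousOn φ (Set.Icc x₀ y₀) :=
      (hf_diff.continuousOn.mono hsub).sub hgcont
    have hivt := intermediate_value_Icc' (le_of_lt hx₀y₀) hφcont
    have h0mem : (0:ℝ) ∈ Set.Icc (φ y₀) (φ x₀) := ⟨le_of_lt hφy₀, le_of_lt hφx₀⟩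
    obtain ⟨c, hc, hφc⟩ := hivt h0mem
    refine ⟨c, ⟨lt_of_lt_of_le hx₀.1 hc.1, lt_of_le_of_lt hc.2 hy₀b⟩, ?_⟩
    have : f c - g c = 0 := hφc
    linarith
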